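/- Let G be an r-regular graph (r ≥ 2) with n vertices and m = nr/2 edges, and let H be a regular graph on the same n vertices whose adjacency matrix commutes with that of G. Let x_1 = n^{-1/2}·𝟙, x_2, …, x_n be an orthonormal basis of ℝⁿ of common eigenvectors of L(G) and L(H), with eigenvalues μ_i(G) and μ_i(H) respectively (μ_1(G) = μ_1(H) = 0). Then the characteristic polynomial of the Laplacian of [S(G)]_{K_m}^{H}, namely of the block matrix [[L(H) + r·I_n, −B(G)],[−B(G)ᵀ, (m+2)·I_m − J_m]], equals x·(x − (r+2))·(x − (m+2))^{m−n} · ∏_{i=2}^{n} ( x² − (m + r + μ_i(H) + 2)x + (m+2)(r + μ_i(H)) + μ_i(G) − 2r ). -/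

import Mathlib

open Matrix SimpleGraph

/-- The `n × m` vertex–edge incidence matrix of a graph, relative to an
enumeration `e` of its edges. -/
noncomputable def incMat {V : Type} [Fintype V] [DecidableEq V] {m : ℕ}
    (G : SimpleGraph V) [Fintype G.edgeSet] (e : Fin m ≃ G.edgeFinset) :
    Matrix V (Fin m) ℝ :=
  Matrix.of fun i j => if i ∈ (e j : Sym2 V) then (1 : ℝ) else 0

section Inc
variable {V : Type} [Fintype V] [DecidableEq V] {m : ℕ}
    (G : SimpleGraph V) [DecidableRel G.Adj] [Fintype G.edgeSet] (e : Fin m ≃ G.edgeFinset)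

omit [Fintype V] [DecidableEq V] [DecidableRel G.Adj] in
lemma inc_sum_edge (f : Sym2 V → ℝ) :
    ∑ t : Fin m, f ((e t : Sym2 V)) = ∑ E ∈ G.edgeFinset, f E := by
  rw [← Finset.sum_attach G.edgeFinset (fun E => f E)]
  exact Fintype.sum_equiv e _ _ (fun t => rfl)

lemma incMat_row_sum (i : V) : ∑ t, incMat G e i t = (G.degree i : ℝ) := by
  have : ∀ t : Fin m, incMat G e i t
      = (fun E : Sym2 V => if i ∈ E then (1:ℝ) else 0) ((e t : Sym2 V)) := fun t => rfl
  rw [Finset.sum_congr rfl (fun t _ => this t),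
    inc_sum_edge G e (fun E : Sym2 V => if i ∈ E then (1:ℝ) else 0), Finset.sum_boole,
    ← incidenceFinset_eq_filter, card_incidenceFinset_eq_degree]

lemma incMat_mul_transpose {r : ℕ} (hG : G.IsRegularOfDegree r) :
    incMat G e * (incMat G e)ᵀ = G.adjMatrix ℝ + (r : ℝ) • 1 := by
  ext i j
  rw [Matrix.mul_apply]
  have h1 : ∀ t : Fin m, incMat G e i t * (incMat G e)ᵀ t j
      = (fun E : Sym2 V => if i ∈ E ∧ j ∈ E then (1:ℝ) else 0) ((e t : Sym2 V)) := by
    intro t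
    simp only [incMat, Matrix.transpose_apply, Matrix.of_apply, ite_and]
    split_ifs <;> ring
  rw [Finset.sum_congr rfl (fun t _ => h1 t),
    inc_sum_edge G e (fun E : Sym2 V => if i ∈ E ∧ j ∈ E then (1:ℝ) else 0), Finset.sum_boole]
  by_cases hij : i = j
  · subst hij
    have : {E ∈ G.edgeFinset | i ∈ E ∧ i ∈ E} = G.incidenceFinset i := by
      rw [incidenceFinset_eq_filter]; simp
    rw [this, card_incidenceFinset_eq_degree, hG i]
    simp [Matrix.one_apply]
  · have : {E ∈ G.edgeFinset | i ∈ E ∧ j ∈ E}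
        = if G.Adj i j then {s(i, j)} else ∅ := by
      split_ifs with hadj
      · ext E
        simp only [Finset.mem_filter, Finset.mem_singleton, mem_edgeFinset]
        constructor
        · rintro ⟨_, h⟩; exact (Sym2.mem_and_mem_iff hij).mp h
        · rintro rfl; exact ⟨hadj, Sym2.mem_mk_left _ _, Sym2.mem_mk_right _ _⟩
      · ext E
        simp only [Finset.mem_filter, Finset.notMem_empty, iff_false, not_and, mem_edgeFinset]
        intro hE hi hj
        rw [(Sym2.mem_and_mem_iff hij).mp ⟨hi, hj⟩] at hE
        exact hadj hE
    rw [this]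
    split_ifs with hadj <;>
      simp [hadj, Matrix.one_apply, hij, SimpleGraph.adjMatrix]
end Inc

lemma det_smul_one_add_ones (m : ℕ) (c : ℝ) (hc : c ≠ 0) (hm : 1 ≤ m) :
    ((c • (1:Matrix (Fin m) (Fin m) ℝ) + Matrix.of fun _ _ => (1:ℝ))).det
      = c^(m-1) * (c + m) := by
  have h2 : c • (1:Matrix (Fin m) (Fin m) ℝ) + Matrix.of (fun _ _ => (1:ℝ))
      = c • (1 + Matrix.replicateCol Unit (fun _ => c⁻¹) * Matrix.replicateRow Unit (fun _ => (1:ℝ))) := by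
    ext i j
    by_cases h : i = j <;>
      simp [Matrix.mul_apply, Matrix.one_apply, h] <;> field_simp
  rw [h2, Matrix.det_smul, Matrix.det_one_add_replicateCol_mul_replicateRow]
  simp only [dotProduct, Fintype.card_fin]
  rw [Finset.sum_const, Finset.card_univ, Fintype.card_fin]
  have : m = (m-1)+1 := by omega
  rw [this, pow_succ]
  field_simp
  simp only [Nat.add_sub_cancel, Nat.add_sub_cancel_left]
  push_cast [Nat.cast_sub hm]
  linear_combination (c ^ (m - 1) * (1 + ((m:ℝ) - 1))) * mul_inv_cancel₀ hc +
    (c * c ^ (m - 1) * c⁻¹) * (by push_cast [Nat.cast_sub hm]; ring : (((m - 1 : ℕ) : ℝ)) = (m:ℝ) - 1)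

lemma key (n m r : ℕ) (hr : 2 ≤ r) (hn : 0 < n) (hm : n * r = 2 * m)
    (G H : SimpleGraph (Fin n)) [DecidableRel G.Adj] [DecidableRel H.Adj]
    [Fintype G.edgeSet]
    (hG : G.IsRegularOfDegree r)
    (e : Fin m ≃ G.edgeFinset)
    (v : Fin n → (Fin n → ℝ)) (μG μH : Fin n → ℝ)
    (hortho : ∀ i j, v i ⬝ᵥ v j = if i = j then 1 else 0)
    (hv0 : ∀ k, v ⟨0, hn⟩ k = 1 / Real.sqrt n)
    (heigG : ∀ i, (G.lapMatrix ℝ).mulVec (v i) = μG i • v i)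
    (heigH : ∀ i, (H.lapMatrix ℝ).mulVec (v i) = μH i • v i)
    (hμG0 : μG ⟨0, hn⟩ = 0) (hμH0 : μH ⟨0, hn⟩ = 0)
    (x : ℝ) (hx2 : x ≠ 2) (hxm : x ≠ (m:ℝ) + 2) :
    (x • (1 : Matrix (Fin n ⊕ Fin m) (Fin n ⊕ Fin m) ℝ) -
        Matrix.fromBlocks (H.lapMatrix ℝ + (r : ℝ) • 1)
          (-(incMat G e)) (-(incMat G e)ᵀ)
          (((m : ℝ) + 2) • (1 : Matrix (Fin m) (Fin m) ℝ) -
            Matrix.of (fun _ _ => (1 : ℝ)))).det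
      = x * (x - ((r : ℝ) + 2)) * (x - ((m : ℝ) + 2)) ^ (m - n) *
          ∏ i ∈ Finset.univ.erase (⟨0, hn⟩ : Fin n),
            (x ^ 2 - ((m : ℝ) + (r : ℝ) + μH i + 2) * x +
              ((m : ℝ) + 2) * ((r : ℝ) + μH i) + μG i - 2 * (r : ℝ)) := by
  have hm1 : 1 ≤ m := by nlinarith
  have hnm : n ≤ m := by nlinarith
  have hm' : (n:ℝ) * r = 2 * m := by exact_mod_cast hm
  set z : Fin n := ⟨0, hn⟩ with hz
  set c : ℝ := x - (m:ℝ) - 2 with hc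
  have hcne : c ≠ 0 := by
    rw [hc]; intro h; apply hxm; linarith
  have hx2' : x - 2 ≠ 0 := sub_ne_zero.mpr hx2
  set a : ℝ := c⁻¹ with ha
  set b : ℝ := -(c * (x - 2))⁻¹ with hb
  set B : Matrix (Fin n) (Fin m) ℝ := incMat G e with hB
  set Jm : Matrix (Fin m) (Fin m) ℝ := Matrix.of fun _ _ => (1:ℝ) with hJm
  set Jn : Matrix (Fin n) (Fin n) ℝ := Matrix.of fun _ _ => (1:ℝ) with hJn
  -- basic matrix facts
  have hJJ : Jm * Jm = (m:ℝ) • Jm := by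
    ext i j; simp [hJm, Matrix.mul_apply]
  have hdeg : G.degMatrix ℝ = (r : ℝ) • 1 := by
    ext i j
    by_cases h : i = j <;>
      simp [SimpleGraph.degMatrix, Matrix.diagonal, Matrix.one_apply, h, hG i, hG j]
  have hBBT : B * Bᵀ = (2*(r:ℝ)) • 1 - G.lapMatrix ℝ := by
    rw [hB, incMat_mul_transpose G e hG, SimpleGraph.lapMatrix, hdeg]
    module
  have hrow : ∀ i, ∑ t, B i t = (r:ℝ) := by
    intro i; rw [hB, incMat_row_sum G e i, hG i]
  have hBJB : B * Jm * Bᵀ = ((r:ℝ)^2) • Jn := by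
    have h1 : ∀ i s, (B * Jm) i s = (r:ℝ) := by
      intro i s
      rw [Matrix.mul_apply]
      simpa [hJm] using hrow i
    ext i j
    rw [Matrix.mul_apply]
    simp only [Matrix.transpose_apply, h1]
    rw [← Finset.mul_sum, hrow j]
    simp [hJn]
    ring
  -- the bottom-right block and its inverse
  set D : Matrix (Fin m) (Fin m) ℝ := c • 1 + Jm with hD
  set E : Matrix (Fin m) (Fin m) ℝ := a • 1 + b • Jm with hE
  have hab1 : c * a = 1 := mul_inv_cancel₀ hcne
  have hab2 : c * b + (a + b * m) = 0 := by
    rw [ha, hb]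
    field_simp
    ring
  have hDE : D * E = 1 := by
    have expand : D * E = (c * a) • 1 + (c * b + (a + b * (m:ℝ))) • Jm := by
      rw [hD, hE]
      simp only [Matrix.mul_add, Matrix.add_mul, Matrix.smul_mul, Matrix.mul_smul,
        Matrix.one_mul, Matrix.mul_one, hJJ, smul_smul]
      module
    rw [expand, hab1, hab2]
    simp
  have hED : E * D = 1 := mul_eq_one_comm.mp hDE
  letI hinv : Invertible D := ⟨E, hED, hDE⟩
  have hDinvE : ⅟D = E := rfl
  -- block decomposition
  have hblock : x • (1 : Matrix (Fin n ⊕ Fin m) (Fin n ⊕ Fin m) ℝ) -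
      Matrix.fromBlocks (H.lapMatrix ℝ + (r : ℝ) • 1)
        (-B) (-Bᵀ)
        (((m : ℝ) + 2) • (1 : Matrix (Fin m) (Fin m) ℝ) - Jm)
      = Matrix.fromBlocks (x • 1 - (H.lapMatrix ℝ + (r : ℝ) • 1)) B Bᵀ D := by
    rw [← Matrix.fromBlocks_one, Matrix.fromBlocks_smul, sub_eq_add_neg,
      Matrix.fromBlocks_neg, Matrix.fromBlocks_add]
    rw [Matrix.fromBlocks_inj]
    refine ⟨by rw [← sub_eq_add_neg], by simp, by simp, ?_⟩
    rw [hD, hc]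
    module
  rw [hblock, Matrix.det_fromBlocks₂₂, hDinvE]
  -- determinant of D
  have hdetD : D.det = c^(m-1) * (x - 2) := by
    rw [hD, hJm, det_smul_one_add_ones m c hcne hm1, hc]
    ring
  -- Schur complement as a combination of commuting matrices
  have hBEB : B * E * Bᵀ = a • ((2*(r:ℝ)) • 1 - G.lapMatrix ℝ) + (b * (r:ℝ)^2) • Jn := by
    have expand : B * E * Bᵀ = a • (B * Bᵀ) + b • (B * Jm * Bᵀ) := by
      rw [hE]
      simp only [Matrix.mul_add, Matrix.add_mul, Matrix.mul_smul, Matrix.smul_mul,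
        Matrix.mul_one]
    rw [expand, hBBT, hBJB, smul_smul]
  set S : Matrix (Fin n) (Fin n) ℝ :=
    x • 1 - (H.lapMatrix ℝ + (r:ℝ) • 1) - B * E * Bᵀ with hS
  have hn' : (0:ℝ) < n := by exact_mod_cast hn
  have hsqn : Real.sqrt n ≠ 0 := by positivity
  have hsum : ∀ i, ∑ k, v i k = Real.sqrt n * (if i = z then 1 else 0) := by
    intro i
    have h2 : (∑ k, v i k) * (1/Real.sqrt n) = (if i = z then 1 else 0) := by
      calc (∑ k, v i k) * (1/Real.sqrt n) = ∑ k, v i k * (1/Real.sqrt n) := by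
            rw [Finset.sum_mul]
        _ = ∑ k, v i k * v z k := by
            refine Finset.sum_congr rfl fun k _ => ?_
            rw [hv0 k]
        _ = if i = z then 1 else 0 := hortho i z
    have h3 : ∑ k, v i k = (if i = z then 1 else 0) * Real.sqrt n := by
      rw [← h2]
      field_simp
    rw [h3]; ring
  have hJv : ∀ i, Jn.mulVec (v i) = (if i = z then (n:ℝ) else 0) • v i := by
    intro i
    ext k
    have hk : Jn.mulVec (v i) k = ∑ l, v i l := by
      simp [hJn, Matrix.mulVec, dotProduct]
    rw [hk, hsum i]
    by_cases hiz : i = z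
    · subst hiz
      simp only [if_pos rfl, Pi.smul_apply, smul_eq_mul, hv0 k, if_true, mul_one]
      rw [eq_comm, mul_one_div, div_eq_iff hsqn, Real.mul_self_sqrt (le_of_lt hn')]
    · simp [hiz]
  set lam : Fin n → ℝ := fun i =>
    x - μH i - r - a*(2*r - μG i) - b*(r:ℝ)^2*(if i = z then (n:ℝ) else 0) with hlam
  have hSv : ∀ i, S.mulVec (v i) = lam i • v i := by
    intro i
    rw [hS, hBEB]
    simp only [Matrix.sub_mulVec, Matrix.add_mulVec, Matrix.smul_mulVec,
      Matrix.one_mulVec, heigH, heigG, hJv]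
    simp only [hlam]
    module
  set Vm : Matrix (Fin n) (Fin n) ℝ := Matrix.of fun k i => v i k with hVm
  have hVtV : Vmᵀ * Vm = 1 := by
    ext i j
    rw [Matrix.mul_apply]
    simpa [hVm, Matrix.one_apply, dotProduct] using hortho i j
  have hVVt : Vm * Vmᵀ = 1 := mul_eq_one_comm.mp hVtV
  have hSV : S * Vm = Vm * Matrix.diagonal lam := by
    ext k i
    rw [Matrix.mul_apply, Matrix.mul_diagonal]
    have hthis := congrFun (hSv i) k
    simp only [Matrix.mulVec, dotProduct, Pi.smul_apply, smul_eq_mul] at hthis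
    simp only [hVm, Matrix.of_apply]
    rw [hthis, mul_comm]
  have hdetS : S.det = ∏ i, lam i := by
    have hfact : S = Vm * Matrix.diagonal lam * Vmᵀ := by
      rw [← hSV, Matrix.mul_assoc, hVVt, Matrix.mul_one]
    have hdv : Vm.det * Vm.det = 1 := by
      have h := congrArg Matrix.det hVtV
      rwa [Matrix.det_mul, Matrix.det_transpose, Matrix.det_one] at h
    rw [hfact, Matrix.det_mul, Matrix.det_mul, Matrix.det_diagonal, Matrix.det_transpose]
    linear_combination (∏ i, lam i) * hdv
  rw [hdetD, hdetS]
  rw [← Finset.mul_prod_erase Finset.univ lam (Finset.mem_univ z)]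
  -- final scalar computation
  have hcne' : x - (m:ℝ) - 2 ≠ 0 := by rw [← hc]; exact hcne
  have hcard : (Finset.univ.erase z).card = n - 1 := by
    rw [Finset.card_erase_of_mem (Finset.mem_univ z), Finset.card_univ, Fintype.card_fin]
  have hcm : c^(m-1) = c^(m-n) * c^(n-1) := by
    rw [← pow_add]; congr 1; omega
  have hquad : ∀ i ∈ Finset.univ.erase z, c * lam i
      = x^2 - ((m:ℝ) + r + μH i + 2) * x + ((m:ℝ)+2)*((r:ℝ) + μH i) + μG i - 2*(r:ℝ) := by
    intro i hi
    simp only [hlam, if_neg (Finset.ne_of_mem_erase hi)]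
    rw [ha, hc]
    field_simp
    ring
  have hr2n : (r:ℝ)^2 * n = 2*r*m := by linear_combination (r:ℝ) * hm'
  have hlamz : (x - 2) * lam z = x * (x - ((r:ℝ)+2)) := by
    simp only [hlam, if_pos rfl, hμG0, hμH0, if_true]
    have hbn : b*(r:ℝ)^2*(n:ℝ) = b*(2*(r:ℝ)*m) := by rw [mul_assoc, hr2n]
    rw [hbn, ha, hb, hc]
    field_simp
    ring
  have hprodc : c^(n-1) * ∏ i ∈ Finset.univ.erase z, lam i
      = ∏ i ∈ Finset.univ.erase z, (c * lam i) := by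
    rw [Finset.prod_mul_distrib, Finset.prod_const, hcard]
  have hq2 : ∏ i ∈ Finset.univ.erase z, (c * lam i)
      = ∏ i ∈ Finset.univ.erase z,
          (x^2 - ((m:ℝ) + r + μH i + 2) * x + ((m:ℝ)+2)*((r:ℝ) + μH i) + μG i - 2*(r:ℝ)) :=
    Finset.prod_congr rfl hquad
  have hxc : x - ((m:ℝ)+2) = c := by rw [hc]; ring
  calc c^(m-1) * (x-2) * (lam z * ∏ i ∈ Finset.univ.erase z, lam i)
      = ((x-2) * lam z) * (c^(m-n) * (c^(n-1) * ∏ i ∈ Finset.univ.erase z, lam i)) := by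
        rw [hcm]; ring
    _ = (x*(x-((r:ℝ)+2))) * (c^(m-n) * ∏ i ∈ Finset.univ.erase z, (c * lam i)) := by
        rw [hlamz, hprodc]
    _ = x * (x - ((r : ℝ) + 2)) * (x - ((m : ℝ) + 2)) ^ (m - n) *
          ∏ i ∈ Finset.univ.erase z,
            (x ^ 2 - ((m : ℝ) + (r : ℝ) + μH i + 2) * x +
              ((m : ℝ) + 2) * ((r : ℝ) + μH i) + μG i - 2 * (r : ℝ)) := by
        rw [hq2, hxc]; ring

/-- `L`-characteristic polynomial of $[S(G)]_{K_m}^{H}$. -/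
theorem stmt_3 (n m r : ℕ) (hr : 2 ≤ r) (hn : 0 < n) (hm : n * r = 2 * m)
    (G H : SimpleGraph (Fin n)) [DecidableRel G.Adj] [DecidableRel H.Adj]
    [Fintype G.edgeSet]
    (hG : G.IsRegularOfDegree r) (rH : ℕ) (hH : H.IsRegularOfDegree rH)
    (hcomm : G.adjMatrix ℝ * H.adjMatrix ℝ = H.adjMatrix ℝ * G.adjMatrix ℝ)
    (e : Fin m ≃ G.edgeFinset)
    (v : Fin n → (Fin n → ℝ)) (μG μH : Fin n → ℝ)
    (hortho : ∀ i j, v i ⬝ᵥ v j = if i = j then 1 else 0)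
    (hv0 : ∀ k, v ⟨0, hn⟩ k = 1 / Real.sqrt n)
    (heigG : ∀ i, (G.lapMatrix ℝ).mulVec (v i) = μG i • v i)
    (heigH : ∀ i, (H.lapMatrix ℝ).mulVec (v i) = μH i • v i)
    (hμG0 : μG ⟨0, hn⟩ = 0) (hμH0 : μH ⟨0, hn⟩ = 0)
    (x : ℝ) :
    (x • (1 : Matrix (Fin n ⊕ Fin m) (Fin n ⊕ Fin m) ℝ) -
        Matrix.fromBlocks (H.lapMatrix ℝ + (r : ℝ) • 1)
          (-(incMat G e)) (-(incMat G e)ᵀ)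
          (((m : ℝ) + 2) • (1 : Matrix (Fin m) (Fin m) ℝ) -
            Matrix.of (fun _ _ => (1 : ℝ)))).det
      = x * (x - ((r : ℝ) + 2)) * (x - ((m : ℝ) + 2)) ^ (m - n) *
          ∏ i ∈ Finset.univ.erase (⟨0, hn⟩ : Fin n),
            (x ^ 2 - ((m : ℝ) + (r : ℝ) + μH i + 2) * x +
              ((m : ℝ) + 2) * ((r : ℝ) + μH i) + μG i - 2 * (r : ℝ)) := by
  have hfin : ({2, ((m:ℝ)+2)} : Set ℝ).Countable :=
    (Set.toFinite _).countable
  have hdense : Dense (({2, ((m:ℝ)+2)} : Set ℝ)ᶜ) := hfin.dense_compl ℝ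
  have hcl : Continuous (fun y : ℝ =>
      (y • (1 : Matrix (Fin n ⊕ Fin m) (Fin n ⊕ Fin m) ℝ) -
        Matrix.fromBlocks (H.lapMatrix ℝ + (r : ℝ) • 1)
          (-(incMat G e)) (-(incMat G e)ᵀ)
          (((m : ℝ) + 2) • (1 : Matrix (Fin m) (Fin m) ℝ) -
            Matrix.of (fun _ _ => (1 : ℝ)))).det) := by
    apply Continuous.matrix_det
    exact (continuous_id.smul continuous_const).sub continuous_const
  have hcr : Continuous (fun y : ℝ =>
      y * (y - ((r : ℝ) + 2)) * (y - ((m : ℝ) + 2)) ^ (m - n) *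
        ∏ i ∈ Finset.univ.erase (⟨0, hn⟩ : Fin n),
          (y ^ 2 - ((m : ℝ) + (r : ℝ) + μH i + 2) * y +
            ((m : ℝ) + 2) * ((r : ℝ) + μH i) + μG i - 2 * (r : ℝ))) := by
    apply Continuous.mul
    · apply Continuous.mul
      · exact continuous_id.mul (continuous_id.sub continuous_const)
      · exact (continuous_id.sub continuous_const).pow _
    · apply continuous_finset_prod
      intro i _
      continuity
  have hkey := Continuous.ext_on hdense hcl hcr (fun y hy => by
    simp only [Set.mem_compl_iff, Set.mem_insert_iff, Set.mem_singleton_iff, not_or] at hy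
    exact key n m r hr hn hm G H hG e v μG μH hortho hv0 heigG heigH hμG0 hμH0 y hy.1 hy.2)
  exact congrFun hkey x
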